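/- If th^ω_Z(G) < |V(G)| − k for a nonnegative real ω and integer k, then there exists a standard zero forcing set B of G with a set of forces realizing pt(G;B) such that |B| + ω·pt(G;B) < |V(G)| − k and |B^(i)| > ω for every round i with 1 ≤ i ≤ pt(G;B), where B^(i) is the set of vertices forced in round i. -/
import Mathlib


open SimpleGraph Set

/-- `v` can force `w` under the standard color change rule given blue set `B`. -/
def canForce {V : Type*} (G : SimpleGraph V) (B : Set V) (v w : V) : Prop :=
  v ∈ B ∧ w ∉ B ∧ G.Adj v w ∧ ∀ u, G.Adj v u → u ∉ B → u = w

/-- One simultaneous round of standard zero forcing. -/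
def zfStep {V : Type*} (G : SimpleGraph V) (B : Set V) : Set V :=
  B ∪ {w | ∃ v, canForce G B v w}

/-- The blue set after `t` simultaneous rounds. -/
def zfIter {V : Type*} (G : SimpleGraph V) (B : Set V) : ℕ → Set V
  | 0 => B
  | t + 1 => zfStep G (zfIter G B t)

/-- `B` is a standard zero forcing set of `G`. -/
def IsZFS {V : Type*} (G : SimpleGraph V) (B : Set V) : Prop :=
  ∃ t, zfIter G B t = Set.univ

/-- Propagation time of `B` in `G`. -/
noncomputable def zfpt {V : Type*} (G : SimpleGraph V) (B : Set V) : ℕ :=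
  sInf {t | zfIter G B t = Set.univ}

/-- Weighted standard throttling number. -/
noncomputable def thw {V : Type*} (G : SimpleGraph V) (ω : ℝ) : ℝ :=
  sInf {x : ℝ | ∃ B : Set V, IsZFS G B ∧ x = (B.ncard : ℝ) + ω * (zfpt G B : ℝ)}

lemma zfStep_mono {V : Type*} (G : SimpleGraph V) {B C : Set V} (h : B ⊆ C) :
    zfStep G B ⊆ zfStep G C := by
  intro w hw
  rcases hw with hw | ⟨v, hv, hwB, hadj, hall⟩
  · exact Or.inl (h hw)
  · by_cases hwC : w ∈ C
    · exact Or.inl hwC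
    · exact Or.inr ⟨v, h hv, hwC, hadj, fun u hu huC => hall u hu (fun hB => huC (h hB))⟩

lemma zfIter_mono {V : Type*} (G : SimpleGraph V) {B C : Set V} (h : B ⊆ C) (t : ℕ) :
    zfIter G B t ⊆ zfIter G C t := by
  induction t with
  | zero => exact h
  | succ t ih => exact zfStep_mono G ih

lemma subset_zfStep {V : Type*} (G : SimpleGraph V) (B : Set V) : B ⊆ zfStep G B :=
  Set.subset_union_left

lemma subset_zfIter {V : Type*} (G : SimpleGraph V) (B : Set V) (t : ℕ) :
    B ⊆ zfIter G B t := by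
  induction t with
  | zero => exact subset_rfl
  | succ t ih => exact ih.trans (subset_zfStep G _)

lemma zfIter_add {V : Type*} (G : SimpleGraph V) (B : Set V) (s t : ℕ) :
    zfIter G B (s + t) = zfIter G (zfIter G B s) t := by
  induction t with
  | zero => rfl
  | succ t ih => rw [← Nat.add_assoc]; show zfStep G _ = zfStep G _; rw [ih]

lemma zfIter_zfpt {V : Type*} (G : SimpleGraph V) {B : Set V} (h : IsZFS G B) :
    zfIter G B (zfpt G B) = Set.univ :=
  Nat.sInf_mem h

lemma key {V : Type*} [Fintype V] (G : SimpleGraph V) (ω : ℝ) (hω : 0 ≤ ω) (c : ℝ) :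
    ∀ n (B : Set V), zfpt G B = n → IsZFS G B →
      (B.ncard : ℝ) + ω * (zfpt G B : ℝ) < c →
    ∃ B' : Set V, IsZFS G B' ∧
      (B'.ncard : ℝ) + ω * (zfpt G B' : ℝ) < c ∧
      ∀ i, 1 ≤ i → i ≤ zfpt G B' →
        ω < ((zfIter G B' i \ zfIter G B' (i - 1)).ncard : ℝ) := by
  intro n
  induction n using Nat.strong_induction_on with
  | _ n ih =>
    intro B hn hZ hval
    by_cases hgood : ∀ i, 1 ≤ i → i ≤ zfpt G B →
        ω < ((zfIter G B i \ zfIter G B (i - 1)).ncard : ℝ)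
    · exact ⟨B, hZ, hval, hgood⟩
    · push_neg at hgood
      obtain ⟨i, hi1, hipt, hbad⟩ := hgood
      set pt := zfpt G B with hpt
      set D := zfIter G B i \ zfIter G B (i - 1) with hD
      set B' := B ∪ D with hB'
      -- B' ⊆ zfIter G B i
      have hB'sub : B' ⊆ zfIter G B i :=
        Set.union_subset (subset_zfIter G B i) Set.diff_subset
      -- zfIter G B i ⊆ zfIter G B' (i-1)
      have hstep : zfIter G B i ⊆ zfIter G B' (i - 1) := by
        intro x hx
        by_cases hxold : x ∈ zfIter G B (i - 1)
        · exact zfIter_mono G Set.subset_union_left (i - 1) hxold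
        · exact subset_zfIter G B' (i - 1) (Or.inr ⟨hx, hxold⟩)
      -- univ after pt - 1 rounds from B'
      have huniv : zfIter G B' (pt - 1) = Set.univ := by
        have h1 : pt - 1 = (i - 1) + (pt - i) := by omega
        have h2 : zfIter G B pt = Set.univ := zfIter_zfpt G hZ
        have h3 : zfIter G B ((i) + (pt - i)) = Set.univ := by
          rw [show i + (pt - i) = pt by omega]; exact h2
        apply Set.eq_univ_of_univ_subset
        rw [h1, zfIter_add]
        calc Set.univ = zfIter G (zfIter G B i) (pt - i) := by
              rw [← zfIter_add, h3]
          _ ⊆ zfIter G (zfIter G B' (i-1)) (pt - i) := zfIter_mono G hstep _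
      have hZ' : IsZFS G B' := ⟨pt - 1, huniv⟩
      have hpt' : zfpt G B' ≤ pt - 1 := Nat.sInf_le huniv
      have hcard : (B'.ncard : ℝ) ≤ (B.ncard : ℝ) + (D.ncard : ℝ) := by
        have := Set.ncard_union_le B D
        exact_mod_cast this
      have hval' : (B'.ncard : ℝ) + ω * (zfpt G B' : ℝ) < c := by
        have h1 : (zfpt G B' : ℝ) ≤ (pt : ℝ) - 1 := by
          have : (zfpt G B' : ℝ) ≤ ((pt - 1 : ℕ) : ℝ) := by exact_mod_cast hpt'
          have h2 : ((pt - 1 : ℕ) : ℝ) = (pt : ℝ) - 1 := by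
            have : 1 ≤ pt := hi1.trans hipt
            push_cast [Nat.cast_sub this]; ring
          linarith
        have h2 : ω * (zfpt G B' : ℝ) ≤ ω * ((pt : ℝ) - 1) :=
          mul_le_mul_of_nonneg_left h1 hω
        calc (B'.ncard : ℝ) + ω * (zfpt G B' : ℝ)
            ≤ (B.ncard : ℝ) + (D.ncard : ℝ) + ω * ((pt : ℝ) - 1) := by linarith
          _ ≤ (B.ncard : ℝ) + ω + ω * ((pt : ℝ) - 1) := by linarith
          _ = (B.ncard : ℝ) + ω * (pt : ℝ) := by ring
          _ < c := hval
      have hlt : zfpt G B' < n := by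
        have : 1 ≤ pt := hi1.trans hipt
        omega
      exact ih (zfpt G B') hlt B' rfl hZ' hval'

theorem standard_witness_exists {V : Type*} [Fintype V] (G : SimpleGraph V)
    (ω : ℝ) (hω : 0 ≤ ω) (k : ℤ)
    (h : thw G ω < (Fintype.card V : ℝ) - (k : ℝ)) :
    ∃ B : Set V, IsZFS G B ∧
      (B.ncard : ℝ) + ω * (zfpt G B : ℝ) < (Fintype.card V : ℝ) - (k : ℝ) ∧
      ∀ i, 1 ≤ i → i ≤ zfpt G B →
        ω < ((zfIter G B i \ zfIter G B (i - 1)).ncard : ℝ) := by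
  set c := (Fintype.card V : ℝ) - (k : ℝ)
  set S := {x : ℝ | ∃ B : Set V, IsZFS G B ∧ x = (B.ncard : ℝ) + ω * (zfpt G B : ℝ)}
  have hne : S.Nonempty := ⟨_, Set.univ, ⟨0, rfl⟩, rfl⟩
  have hbdd : BddBelow S := by
    refine ⟨0, fun x hx => ?_⟩
    obtain ⟨B, _, rfl⟩ := hx
    positivity
  obtain ⟨x, hxS, hxc⟩ := exists_lt_of_csInf_lt hne h
  obtain ⟨B, hZ, rfl⟩ := hxS
  exact key G ω hω c (zfpt G B) B rfl hZ hxc
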